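/- Let f = x^11 + y^11 + x^6·y^6, regarded as an element of ℂ⟦x,y⟧. Then the Tjurina number of f at the origin equals 84, i.e., dim_ℂ ℂ⟦x,y⟧/(f, ∂f/∂x, ∂f/∂y) = 84. -/

import Mathlib

noncomputable section

/-- Formal partial derivative `∂f/∂xᵢ` of a formal power series in two variables:
the coefficient of `x^d` in `∂f/∂xᵢ` is `(dᵢ + 1)` times the coefficient of `x^(d + eᵢ)` in `f`. -/
def pder (i : Fin 2) (f : MvPowerSeries (Fin 2) ℂ) : MvPowerSeries (Fin 2) ℂ :=
  fun d => ((d i : ℂ) + 1) * MvPowerSeries.coeff (d + Finsupp.single i 1) f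

/-- The Jacobian ideal `(∂f/∂x, ∂f/∂y)` of `f ∈ ℂ⟦x,y⟧`. -/
def milnorIdeal (f : MvPowerSeries (Fin 2) ℂ) : Ideal (MvPowerSeries (Fin 2) ℂ) :=
  Ideal.span {pder 0 f, pder 1 f}

/-- The Tjurina ideal `(f, ∂f/∂x, ∂f/∂y)` of `f ∈ ℂ⟦x,y⟧`. -/
def tjurinaIdeal (f : MvPowerSeries (Fin 2) ℂ) : Ideal (MvPowerSeries (Fin 2) ℂ) :=
  Ideal.span {f, pder 0 f, pder 1 f}

/-- The Milnor number `μ(f) = dim_ℂ ℂ⟦x,y⟧/(∂f/∂x, ∂f/∂y)`. -/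
def milnor (f : MvPowerSeries (Fin 2) ℂ) : ℕ :=
  Module.finrank ℂ (MvPowerSeries (Fin 2) ℂ ⧸ milnorIdeal f)

/-- The Tjurina number `τ(f) = dim_ℂ ℂ⟦x,y⟧/(f, ∂f/∂x, ∂f/∂y)`. -/
def tjurina (f : MvPowerSeries (Fin 2) ℂ) : ℕ :=
  Module.finrank ℂ (MvPowerSeries (Fin 2) ℂ ⧸ tjurinaIdeal f)

/-- The substitution `f(x,y) ↦ f(x, x·y)` on `ℂ⟦x,y⟧`: the monomial `x^p y^q` is sent to
`x^(p+q) y^q`, so the coefficient of `x^a y^b` in the result is the coefficient of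
`x^(a-b) y^b` in `f` when `b ≤ a`, and `0` otherwise. -/
def substXY (f : MvPowerSeries (Fin 2) ℂ) : MvPowerSeries (Fin 2) ℂ :=
  fun d => if d 1 ≤ d 0 then
      MvPowerSeries.coeff (Finsupp.single 0 (d 0 - d 1) + Finsupp.single 1 (d 1)) f
    else 0

/-- The natural inclusion `ℂ⟦x⟧ → ℂ⟦x,y⟧` (series in the first variable only). -/
def ofX (a : PowerSeries ℂ) : MvPowerSeries (Fin 2) ℂ :=
  fun d => if d 1 = 0 then PowerSeries.coeff (d 0) a else 0

/-- `f ∈ ℂ⟦x,y⟧` has order (multiplicity at the origin) exactly `m`: all terms of total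
degree `< m` vanish and some term of total degree `m` is nonzero. -/
def hasMult (f : MvPowerSeries (Fin 2) ℂ) (m : ℕ) : Prop :=
  (∀ d : Fin 2 →₀ ℕ, (d.sum fun _ n => n) < m → MvPowerSeries.coeff d f = 0) ∧
    ∃ d : Fin 2 →₀ ℕ, (d.sum fun _ n => n) = m ∧ MvPowerSeries.coeff d f ≠ 0

/-! ### Auxiliary development for the computation of `τ(x^11 + y^11 + x^6 y^6)` -/

namespace TjurinaAux

open MvPowerSeries Finset

abbrev R2 := MvPowerSeries (Fin 2) ℂ

/-- exponent `(a, b)` as a finitely supported function on `Fin 2` -/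
def md (a b : ℕ) : Fin 2 →₀ ℕ := Finsupp.single 0 a + Finsupp.single 1 b

/-- the monomial `c · x^a y^b` -/
def Mn (a b : ℕ) (c : ℂ) : R2 := MvPowerSeries.monomial (md a b) c

@[simp] lemma md_apply0 (a b : ℕ) : md a b 0 = a := by simp [md]
@[simp] lemma md_apply1 (a b : ℕ) : md a b 1 = b := by simp [md]

lemma eq_md (d : Fin 2 →₀ ℕ) : d = md (d 0) (d 1) := by
  ext i; fin_cases i <;> simp [md]

lemma md_le_iff {a b p q : ℕ} : md p q ≤ md a b ↔ p ≤ a ∧ q ≤ b := by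
  constructor
  · intro h; exact ⟨by simpa [md] using h 0, by simpa [md] using h 1⟩
  · intro ⟨h1, h2⟩ i; fin_cases i <;> simpa [md]

lemma md_inj {a b p q : ℕ} : md a b = md p q ↔ a = p ∧ b = q := by
  constructor
  · intro h
    have h0 := congrArg (fun f : Fin 2 →₀ ℕ => f 0) h
    have h1 := congrArg (fun f : Fin 2 →₀ ℕ => f 1) h
    simp [md] at h0 h1; exact ⟨h0, h1⟩
  · rintro ⟨rfl, rfl⟩; rfl

lemma md_add (a b p q : ℕ) : md a b + md p q = md (a+p) (b+q) := by
  ext i; fin_cases i <;> simp [md]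

lemma md_sub (a b p q : ℕ) : md a b - md p q = md (a-p) (b-q) := by
  ext i; fin_cases i <;> simp [md, Finsupp.tsub_apply]

lemma single0 (n : ℕ) : (Finsupp.single 0 n : Fin 2 →₀ ℕ) = md n 0 := by simp [md]
lemma single1 (n : ℕ) : (Finsupp.single 1 n : Fin 2 →₀ ℕ) = md 0 n := by simp [md]

lemma Mn_mul (a b p q : ℕ) (c c' : ℂ) : Mn a b c * Mn p q c' = Mn (a+p) (b+q) (c*c') := by
  rw [Mn, Mn, Mn, monomial_mul_monomial, md_add]

lemma smul_Mn (x : ℂ) (a b : ℕ) (c : ℂ) : x • Mn a b c = Mn a b (x*c) := by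
  rw [Mn, Mn, ← map_smul, smul_eq_mul]

lemma coeff_Mn (a b p q : ℕ) (c : ℂ) :
    MvPowerSeries.coeff (md a b) (Mn p q c) = if a = p ∧ b = q then c else 0 := by
  rw [Mn, coeff_monomial]; simp [md_inj]

lemma coeff_mul_Mn (v : R2) (a b p q : ℕ) (c : ℂ) :
    MvPowerSeries.coeff (md a b) (v * Mn p q c)
      = if p ≤ a ∧ q ≤ b then MvPowerSeries.coeff (md (a-p) (b-q)) v * c else 0 := by
  rw [Mn, coeff_mul_monomial]
  by_cases h : p ≤ a ∧ q ≤ b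
  · rw [if_pos (md_le_iff.2 h), if_pos h, md_sub]
  · rw [if_neg (fun hc => h (md_le_iff.1 hc)), if_neg h]

/-- `f = x^11 + y^11 + x^6 y^6` -/
def Fx : R2 := (MvPowerSeries.X 0) ^ 11 + (MvPowerSeries.X 1) ^ 11
  + (MvPowerSeries.X 0) ^ 6 * (MvPowerSeries.X 1) ^ 6

lemma X_pow_mul_X_pow (a b : ℕ) :
    (X 0 : R2)^a * (X 1 : R2)^b = Mn a b 1 := by
  rw [X_pow_eq, X_pow_eq, Mn, monomial_mul_monomial, one_mul, ← md]

lemma FX_eq : Fx = Mn 11 0 1 + Mn 0 11 1 + Mn 6 6 1 := by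
  rw [Fx, X_pow_mul_X_pow]
  rw [show ((X 0)^11 : R2) = (X 0)^11 * (X 1)^0 by ring, X_pow_mul_X_pow]
  rw [show ((X 1)^11 : R2) = (X 0)^0 * (X 1)^11 by ring, X_pow_mul_X_pow]

lemma coeff_pder0 (f : R2) (a b : ℕ) :
    MvPowerSeries.coeff (md a b) (pder 0 f)
      = ((a:ℂ)+1) * MvPowerSeries.coeff (md (a+1) b) f := by
  show ((md a b 0 : ℂ) + 1) * MvPowerSeries.coeff (md a b + Finsupp.single 0 1) f = _
  rw [single0, md_add]
  norm_num [md]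

lemma coeff_pder1 (f : R2) (a b : ℕ) :
    MvPowerSeries.coeff (md a b) (pder 1 f)
      = ((b:ℂ)+1) * MvPowerSeries.coeff (md a (b+1)) f := by
  show ((md a b 1 : ℂ) + 1) * MvPowerSeries.coeff (md a b + Finsupp.single 1 1) f = _
  rw [single1, md_add]
  norm_num [md]

lemma g_eq : pder 0 Fx = Mn 10 0 11 + Mn 5 6 6 := by
  apply MvPowerSeries.ext; intro d
  obtain ⟨a, b, rfl⟩ : ∃ a b, d = md a b := ⟨_, _, eq_md d⟩
  rw [coeff_pder0, FX_eq]
  simp only [map_add, coeff_Mn]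
  by_cases h1 : a = 10 ∧ b = 0
  · obtain ⟨rfl, rfl⟩ := h1; norm_num
  by_cases h2 : a = 5 ∧ b = 6
  · obtain ⟨rfl, rfl⟩ := h2; norm_num
  rw [if_neg (show ¬(a+1 = 11 ∧ b = 0) by omega), if_neg (show ¬(a+1 = 0 ∧ b = 11) by omega),
    if_neg (show ¬(a+1 = 6 ∧ b = 6) by omega), if_neg h1, if_neg h2]
  ring

lemma h_eq : pder 1 Fx = Mn 0 10 11 + Mn 6 5 6 := by
  apply MvPowerSeries.ext; intro d
  obtain ⟨a, b, rfl⟩ : ∃ a b, d = md a b := ⟨_, _, eq_md d⟩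
  rw [coeff_pder1, FX_eq]
  simp only [map_add, coeff_Mn]
  by_cases h1 : a = 0 ∧ b = 10
  · obtain ⟨rfl, rfl⟩ := h1; norm_num
  by_cases h2 : a = 6 ∧ b = 5
  · obtain ⟨rfl, rfl⟩ := h2; norm_num
  rw [if_neg (show ¬(a = 11 ∧ b+1 = 0) by omega), if_neg (show ¬(a = 0 ∧ b+1 = 11) by omega),
    if_neg (show ¬(a = 6 ∧ b+1 = 6) by omega), if_neg h1, if_neg h2]
  ring

/-! ### Membership lemmas in the Tjurina ideal -/

/-- the Tjurina ideal of `f` -/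
def J : Ideal R2 := tjurinaIdeal Fx

lemma hF_mem : (Mn 11 0 1 + Mn 0 11 1 + Mn 6 6 1) ∈ J := by
  rw [← FX_eq]; exact Ideal.subset_span (by simp)

lemma hg_mem : (Mn 10 0 11 + Mn 5 6 6) ∈ J := by
  rw [← g_eq]; exact Ideal.subset_span (by simp)

lemma hh_mem : (Mn 0 10 11 + Mn 6 5 6) ∈ J := by
  rw [← h_eq]; exact Ideal.subset_span (by simp)

lemma hg_mem' : ((11:ℂ) • Mn 10 0 1 + (6:ℂ) • Mn 5 6 1) ∈ J := by
  have := hg_mem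
  rwa [show Mn 10 0 11 + Mn 5 6 6 = (11:ℂ) • Mn 10 0 1 + (6:ℂ) • Mn 5 6 1 by
    rw [smul_Mn, smul_Mn]; norm_num]
  at this

lemma hh_mem' : ((11:ℂ) • Mn 0 10 1 + (6:ℂ) • Mn 6 5 1) ∈ J := by
  have := hh_mem
  rwa [show Mn 0 10 11 + Mn 6 5 6 = (11:ℂ) • Mn 0 10 1 + (6:ℂ) • Mn 6 5 1 by
    rw [smul_Mn, smul_Mn]; norm_num]
  at this

lemma inv_smul_mem {x : R2} (hx : (11:ℂ) • x ∈ J) : x ∈ J := by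
  have : x = (11:ℂ)⁻¹ • ((11:ℂ) • x) := by rw [smul_smul]; norm_num
  rw [this]; exact Submodule.smul_of_tower_mem _ _ hx

lemma mem_k : Mn 6 6 1 ∈ J := by
  have hId : Mn 6 6 1 = Mn 1 0 1 * ((11:ℂ) • Mn 10 0 1 + (6:ℂ) • Mn 5 6 1)
      + Mn 0 1 1 * ((11:ℂ) • Mn 0 10 1 + (6:ℂ) • Mn 6 5 1)
      - (11:ℂ) • (Mn 11 0 1 + Mn 0 11 1 + Mn 6 6 1) := by
    simp only [mul_add, mul_smul_comm, Mn_mul, mul_one]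
    norm_num
    try module
  rw [hId]
  exact sub_mem (add_mem (Ideal.mul_mem_left _ _ hg_mem') (Ideal.mul_mem_left _ _ hh_mem'))
    (Submodule.smul_of_tower_mem _ _ hF_mem)

lemma mem_x11 : Mn 11 0 1 ∈ J := by
  apply inv_smul_mem
  have hId : (11:ℂ) • Mn 11 0 1
      = Mn 1 0 1 * ((11:ℂ) • Mn 10 0 1 + (6:ℂ) • Mn 5 6 1) - (6:ℂ) • Mn 6 6 1 := by
    simp only [mul_add, mul_smul_comm, Mn_mul, mul_one]
    norm_num
    try module
  rw [hId]
  exact sub_mem (Ideal.mul_mem_left _ _ hg_mem') (Submodule.smul_of_tower_mem _ _ mem_k)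

lemma mem_y11 : Mn 0 11 1 ∈ J := by
  apply inv_smul_mem
  have hId : (11:ℂ) • Mn 0 11 1
      = Mn 0 1 1 * ((11:ℂ) • Mn 0 10 1 + (6:ℂ) • Mn 6 5 1) - (6:ℂ) • Mn 6 6 1 := by
    simp only [mul_add, mul_smul_comm, Mn_mul, mul_one]
    norm_num
    try module
  rw [hId]
  exact sub_mem (Ideal.mul_mem_left _ _ hh_mem') (Submodule.smul_of_tower_mem _ _ mem_k)

lemma mem_E (j : ℕ) : ((11:ℂ) • Mn 10 j 1 + (6:ℂ) • Mn 5 (j+6) 1) ∈ J := by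
  have hId : (11:ℂ) • Mn 10 j 1 + (6:ℂ) • Mn 5 (j+6) 1
      = Mn 0 j 1 * ((11:ℂ) • Mn 10 0 1 + (6:ℂ) • Mn 5 6 1) := by
    simp only [mul_add, mul_smul_comm, Mn_mul, mul_one]
    norm_num
    try module
  rw [hId]
  exact Ideal.mul_mem_left _ _ hg_mem'

lemma mem_E' (j : ℕ) : ((11:ℂ) • Mn j 10 1 + (6:ℂ) • Mn (j+6) 5 1) ∈ J := by
  have hId : (11:ℂ) • Mn j 10 1 + (6:ℂ) • Mn (j+6) 5 1
      = Mn j 0 1 * ((11:ℂ) • Mn 0 10 1 + (6:ℂ) • Mn 6 5 1) := by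
    simp only [mul_add, mul_smul_comm, Mn_mul, mul_one]
    norm_num
    try module
  rw [hId]
  exact Ideal.mul_mem_left _ _ hh_mem'

lemma mem_510 : Mn 5 10 1 ∈ J := by
  apply inv_smul_mem
  have hId : (11:ℂ) • Mn 5 10 1
      = Mn 5 0 1 * ((11:ℂ) • Mn 0 10 1 + (6:ℂ) • Mn 6 5 1) - (6:ℂ) • (Mn 0 5 1 * Mn 11 0 1) := by
    simp only [mul_add, mul_smul_comm, Mn_mul, mul_one]
    norm_num
    try module
  rw [hId]
  exact sub_mem (Ideal.mul_mem_left _ _ hh_mem')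
    (Submodule.smul_of_tower_mem _ _ (Ideal.mul_mem_left _ _ mem_x11))

lemma mem_104 : Mn 10 4 1 ∈ J := by
  apply inv_smul_mem
  have hId : (11:ℂ) • Mn 10 4 1
      = Mn 0 4 1 * ((11:ℂ) • Mn 10 0 1 + (6:ℂ) • Mn 5 6 1) - (6:ℂ) • Mn 5 10 1 := by
    simp only [mul_add, mul_smul_comm, Mn_mul, mul_one]
    norm_num
    try module
  rw [hId]
  exact sub_mem (Ideal.mul_mem_left _ _ hg_mem') (Submodule.smul_of_tower_mem _ _ mem_510)

lemma mem_105 : Mn 10 5 1 ∈ J := by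
  apply inv_smul_mem
  have hId : (11:ℂ) • Mn 10 5 1
      = Mn 0 5 1 * ((11:ℂ) • Mn 10 0 1 + (6:ℂ) • Mn 5 6 1) - (6:ℂ) • (Mn 5 0 1 * Mn 0 11 1) := by
    simp only [mul_add, mul_smul_comm, Mn_mul, mul_one]
    norm_num
    try module
  rw [hId]
  exact sub_mem (Ideal.mul_mem_left _ _ hg_mem')
    (Submodule.smul_of_tower_mem _ _ (Ideal.mul_mem_left _ _ mem_y11))

lemma mem_410 : Mn 4 10 1 ∈ J := by
  apply inv_smul_mem
  have hId : (11:ℂ) • Mn 4 10 1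
      = Mn 4 0 1 * ((11:ℂ) • Mn 0 10 1 + (6:ℂ) • Mn 6 5 1) - (6:ℂ) • Mn 10 5 1 := by
    simp only [mul_add, mul_smul_comm, Mn_mul, mul_one]
    norm_num
    try module
  rw [hId]
  exact sub_mem (Ideal.mul_mem_left _ _ hh_mem') (Submodule.smul_of_tower_mem _ _ mem_105)

/-! ### The normal-form coefficient functionals -/

def inB (a b : ℕ) : Prop :=
  a ≤ 10 ∧ b ≤ 10 ∧ ¬(6 ≤ a ∧ 6 ≤ b) ∧ ¬(a = 10 ∧ b ≤ 5) ∧ ¬(b = 10 ∧ a ≤ 5)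

instance inB_dec : ∀ a b, Decidable (inB a b) := fun a b => by unfold inB; infer_instance

/-- monomial basis of the quotient -/
def B : Finset (ℕ × ℕ) := (Finset.range 11 ×ˢ Finset.range 11).filter (fun p => inB p.1 p.2)

lemma mem_B_iff {p : ℕ × ℕ} : p ∈ B ↔ inB p.1 p.2 := by
  simp only [B, mem_filter, mem_product, mem_range]
  constructor
  · exact fun h => h.2
  · intro h; have h1 := h.1; have h2 := h.2.1; exact ⟨⟨by omega, by omega⟩, h⟩

lemma card_B : B.card = 84 := by decide

def corr1 (u : R2) (p : ℕ × ℕ) : ℂ :=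
  if p.1 = 5 ∧ 6 ≤ p.2 ∧ p.2 ≤ 9 then
    (-(6/11) : ℂ) * MvPowerSeries.coeff (md 10 (p.2-6)) u else 0

def corr2 (u : R2) (p : ℕ × ℕ) : ℂ :=
  if p.2 = 5 ∧ 6 ≤ p.1 ∧ p.1 ≤ 9 then
    (-(6/11) : ℂ) * MvPowerSeries.coeff (md (p.1-6) 10) u else 0

/-- the coefficient of the reduced normal form of `u` at the basis monomial `x^p.1 y^p.2` -/
def ell (p : ℕ × ℕ) (u : R2) : ℂ :=
  MvPowerSeries.coeff (md p.1 p.2) u + corr1 u p + corr2 u p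

lemma ell_add (p : ℕ × ℕ) (u v : R2) : ell p (u + v) = ell p u + ell p v := by
  unfold ell corr1 corr2
  split_ifs <;> simp [mul_add] <;> ring

lemma ell_smul (p : ℕ × ℕ) (c : ℂ) (u : R2) : ell p (c • u) = c * ell p u := by
  unfold ell corr1 corr2
  split_ifs <;> simp [mul_add] <;> ring

lemma ell_zero (p : ℕ × ℕ) : ell p 0 = 0 := by
  unfold ell corr1 corr2
  split_ifs <;> simp

/-! ### Vanishing of the functionals on the ideal -/

lemma ell_vF (a b : ℕ) (hB : inB a b) (v : R2) :
    ell (a,b) (v * (Mn 11 0 1 + Mn 0 11 1 + Mn 6 6 1)) = 0 := by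
  obtain ⟨h1, h2, h3, h4, h5⟩ := hB
  unfold ell corr1 corr2
  simp only [mul_add, map_add, coeff_mul_Mn]
  by_cases hc1 : a = 5 ∧ 6 ≤ b ∧ b ≤ 9
  · obtain ⟨rfl, hb1, hb2⟩ := hc1
    norm_num
    try split_ifs <;> first | omega | ring | (norm_num; ring)
  by_cases hc2 : b = 5 ∧ 6 ≤ a ∧ a ≤ 9
  · obtain ⟨rfl, ha1, ha2⟩ := hc2
    norm_num
    try split_ifs <;> first | omega | ring | (norm_num; ring)
  · rw [if_neg hc1, if_neg hc2]
    norm_num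
    try split_ifs <;> first | omega | ring | (norm_num; ring)

lemma ell_vg (a b : ℕ) (hB : inB a b) (v : R2) :
    ell (a,b) (v * (Mn 10 0 11 + Mn 5 6 6)) = 0 := by
  obtain ⟨h1, h2, h3, h4, h5⟩ := hB
  unfold ell corr1 corr2
  simp only [mul_add, map_add, coeff_mul_Mn]
  by_cases hc1 : a = 5 ∧ 6 ≤ b ∧ b ≤ 9
  · obtain ⟨rfl, hb1, hb2⟩ := hc1
    norm_num
    try split_ifs <;> first | omega | ring | (norm_num; ring)
  by_cases hc2 : b = 5 ∧ 6 ≤ a ∧ a ≤ 9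
  · obtain ⟨rfl, ha1, ha2⟩ := hc2
    norm_num
    try split_ifs <;> first | omega | ring | (norm_num; ring)
  · rw [if_neg hc1, if_neg hc2]
    norm_num
    try split_ifs <;> first | omega | ring | (norm_num; ring)

lemma ell_vh (a b : ℕ) (hB : inB a b) (v : R2) :
    ell (a,b) (v * (Mn 0 10 11 + Mn 6 5 6)) = 0 := by
  obtain ⟨h1, h2, h3, h4, h5⟩ := hB
  unfold ell corr1 corr2
  simp only [mul_add, map_add, coeff_mul_Mn]
  by_cases hc1 : a = 5 ∧ 6 ≤ b ∧ b ≤ 9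
  · obtain ⟨rfl, hb1, hb2⟩ := hc1
    norm_num
    try split_ifs <;> first | omega | ring | (norm_num; ring)
  by_cases hc2 : b = 5 ∧ 6 ≤ a ∧ a ≤ 9
  · obtain ⟨rfl, ha1, ha2⟩ := hc2
    norm_num
    try split_ifs <;> first | omega | ring | (norm_num; ring)
  · rw [if_neg hc1, if_neg hc2]
    norm_num
    try split_ifs <;> first | omega | ring | (norm_num; ring)

lemma ell_vanish_of_mem {u : R2} (hu : u ∈ J) (p : ℕ × ℕ) (hp : inB p.1 p.2) :
    ell p u = 0 := by
  let T : Ideal R2 :=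
    { carrier := {w | ∀ v : R2, ∀ q : ℕ × ℕ, inB q.1 q.2 → ell q (v * w) = 0}
      zero_mem' := by
        intro v q hq; rw [mul_zero]; exact ell_zero q
      add_mem' := by
        intro x y hx hy v q hq
        rw [mul_add, ell_add, hx v q hq, hy v q hq, add_zero]
      smul_mem' := by
        intro c x hx v q hq
        rw [smul_eq_mul, ← mul_assoc]
        exact hx (v * c) q hq }
  have hJT : J ≤ T := by
    rw [J, tjurinaIdeal, Ideal.span_le]
    intro w hw
    simp only [Set.mem_insert_iff, Set.mem_singleton_iff] at hw
    rcases hw with rfl | rfl | rfl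
    · intro v q hq
      rw [show Fx = Mn 11 0 1 + Mn 0 11 1 + Mn 6 6 1 from FX_eq]
      exact ell_vF q.1 q.2 hq v
    · intro v q hq
      rw [g_eq]
      exact ell_vg q.1 q.2 hq v
    · intro v q hq
      rw [h_eq]
      exact ell_vh q.1 q.2 hq v
  have := hJT hu 1 p hp
  rwa [one_mul] at this

/-! ### Decomposition of a power series into normal form plus ideal element -/

def shifted (e : Fin 2 →₀ ℕ) (P : (Fin 2 →₀ ℕ) → Prop) [DecidablePred P] (u : R2) : R2 :=
  fun d => if P (d + e) then u (d + e) else 0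

/-- restriction of a series to exponents `≥ e` satisfying `P` -/
def restr (e : Fin 2 →₀ ℕ) (P : (Fin 2 →₀ ℕ) → Prop) [DecidablePred P] (u : R2) : R2 :=
  fun d => if e ≤ d ∧ P d then u d else 0

lemma coeff_restr (e : Fin 2 →₀ ℕ) (P : (Fin 2 →₀ ℕ) → Prop) [DecidablePred P] (u : R2)
    (d : Fin 2 →₀ ℕ) :
    MvPowerSeries.coeff d (restr e P u)
      = if e ≤ d ∧ P d then MvPowerSeries.coeff d u else 0 :=
  rfl

lemma restr_eq_mul (e : Fin 2 →₀ ℕ) (P : (Fin 2 →₀ ℕ) → Prop) [DecidablePred P] (u : R2) :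
    restr e P u = (MvPowerSeries.monomial e 1) * shifted e P u := by
  apply MvPowerSeries.ext; intro d
  rw [coeff_monomial_mul]
  by_cases h : e ≤ d
  · rw [if_pos h]
    have hde : d - e + e = d := tsub_add_cancel_of_le h
    show (if e ≤ d ∧ P d then u d else 0) = 1 * (if P (d - e + e) then u (d - e + e) else 0)
    rw [hde, one_mul]
    by_cases hp : P d
    · rw [if_pos ⟨h, hp⟩, if_pos hp]
    · rw [if_neg (fun hc => hp hc.2), if_neg hp]
  · rw [if_neg h]
    show (if e ≤ d ∧ P d then u d else 0) = 0
    rw [if_neg (fun hc => h hc.1)]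

lemma restr_mem (e : Fin 2 →₀ ℕ) (hm : (MvPowerSeries.monomial e 1) ∈ J)
    (P : (Fin 2 →₀ ℕ) → Prop) [DecidablePred P] (u : R2) : restr e P u ∈ J := by
  rw [restr_eq_mul]
  exact Ideal.mul_mem_right _ _ hm

def A1 (u : R2) : R2 := restr (md 11 0) (fun _ => True) u
def A2 (u : R2) : R2 := restr (md 0 11) (fun d => d 0 ≤ 10) u
def A3 (u : R2) : R2 := restr (md 6 6) (fun d => d 0 ≤ 10 ∧ d 1 ≤ 10) u
def A4 (u : R2) : R2 :=
  (∑ j ∈ range 6, MvPowerSeries.coeff (md 10 j) u • Mn 10 j 1)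
  + (∑ j ∈ range 6, MvPowerSeries.coeff (md j 10) u • Mn j 10 1)
def A5 (u : R2) : R2 := ∑ p ∈ B, MvPowerSeries.coeff (md p.1 p.2) u • Mn p.1 p.2 1

lemma A1_mem (u : R2) : A1 u ∈ J := restr_mem _ mem_x11 _ u
lemma A2_mem (u : R2) : A2 u ∈ J := restr_mem _ mem_y11 _ u
lemma A3_mem (u : R2) : A3 u ∈ J := restr_mem _ mem_k _ u

lemma decomp (u : R2) : u = A1 u + A2 u + A3 u + A4 u + A5 u := by
  apply MvPowerSeries.ext; intro d
  obtain ⟨a, b, rfl⟩ : ∃ a b, d = md a b := ⟨_, _, eq_md d⟩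
  have e4a : ∑ j ∈ range 6, MvPowerSeries.coeff (md 10 j) u
        • MvPowerSeries.coeff (md a b) (Mn 10 j 1)
      = if a = 10 ∧ b ≤ 5 then MvPowerSeries.coeff (md a b) u else 0 := by
    by_cases h : a = 10 ∧ b ≤ 5
    · obtain ⟨rfl, hb⟩ := h
      rw [if_pos ⟨rfl, hb⟩, Finset.sum_eq_single_of_mem b (by simp; omega)]
      · rw [coeff_Mn, if_pos ⟨rfl, rfl⟩, smul_eq_mul, mul_one]
      · intro j hj hne; rw [coeff_Mn, if_neg (by omega), smul_zero]
    · rw [if_neg h]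
      apply Finset.sum_eq_zero; intro j hj
      simp only [mem_range] at hj
      rw [coeff_Mn, if_neg (by omega), smul_zero]
  have e4b : ∑ j ∈ range 6, MvPowerSeries.coeff (md j 10) u
        • MvPowerSeries.coeff (md a b) (Mn j 10 1)
      = if b = 10 ∧ a ≤ 5 then MvPowerSeries.coeff (md a b) u else 0 := by
    by_cases h : b = 10 ∧ a ≤ 5
    · obtain ⟨rfl, ha⟩ := h
      rw [if_pos ⟨rfl, ha⟩, Finset.sum_eq_single_of_mem a (by simp; omega)]
      · rw [coeff_Mn, if_pos ⟨rfl, rfl⟩, smul_eq_mul, mul_one]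
      · intro j hj hne; rw [coeff_Mn, if_neg (by omega), smul_zero]
    · rw [if_neg h]
      apply Finset.sum_eq_zero; intro j hj
      simp only [mem_range] at hj
      rw [coeff_Mn, if_neg (by omega), smul_zero]
  have e5 : ∑ p ∈ B, MvPowerSeries.coeff (md p.1 p.2) u
        • MvPowerSeries.coeff (md a b) (Mn p.1 p.2 1)
      = if inB a b then MvPowerSeries.coeff (md a b) u else 0 := by
    by_cases h : inB a b
    · rw [if_pos h, Finset.sum_eq_single_of_mem (a,b) (mem_B_iff.2 h)]
      · rw [coeff_Mn, if_pos ⟨rfl, rfl⟩, smul_eq_mul, mul_one]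
      · intro p hp hne
        rw [coeff_Mn, if_neg, smul_zero]
        rintro ⟨rfl, rfl⟩; exact hne rfl
    · rw [if_neg h]
      apply Finset.sum_eq_zero; intro p hp
      rw [coeff_Mn, if_neg, smul_zero]
      rintro ⟨rfl, rfl⟩; exact h (mem_B_iff.1 hp)
  simp only [map_add, A1, A2, A3, A4, A5, coeff_restr, map_sum, map_smul, e4a, e4b, e5]
  simp only [md_le_iff, md_apply0, md_apply1]
  by_cases r1 : 11 ≤ a
  · rw [if_pos ⟨⟨r1, Nat.zero_le b⟩, trivial⟩, if_neg (by omega), if_neg (by omega),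
      if_neg (by omega), if_neg (by omega), if_neg (show ¬ inB a b by unfold inB; omega)]
    ring
  by_cases r2 : 11 ≤ b
  · rw [if_neg (by omega), if_pos ⟨⟨Nat.zero_le a, r2⟩, by omega⟩, if_neg (by omega),
      if_neg (by omega), if_neg (by omega), if_neg (show ¬ inB a b by unfold inB; omega)]
    ring
  by_cases r3 : 6 ≤ a ∧ 6 ≤ b
  · rw [if_neg (by omega), if_neg (by omega), if_pos ⟨⟨r3.1, r3.2⟩, by omega, by omega⟩,
      if_neg (by omega), if_neg (by omega), if_neg (show ¬ inB a b by unfold inB; omega)]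
    ring
  by_cases r4 : a = 10 ∧ b ≤ 5
  · rw [if_neg (by omega), if_neg (by omega), if_neg (by omega), if_pos r4,
      if_neg (by omega), if_neg (show ¬ inB a b by unfold inB; omega)]
    ring
  by_cases r5 : b = 10 ∧ a ≤ 5
  · rw [if_neg (by omega), if_neg (by omega), if_neg (by omega), if_neg (by omega),
      if_pos r5, if_neg (show ¬ inB a b by unfold inB; omega)]
    ring
  · rw [if_neg (by omega), if_neg (by omega), if_neg (by omega), if_neg (by omega),
      if_neg (by omega), if_pos (show inB a b by unfold inB; omega)]
    ring

/-- the normal form of `u` modulo the Tjurina ideal -/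
def NF (u : R2) : R2 := ∑ p ∈ B, ell p u • Mn p.1 p.2 1

lemma sum_corr1 (u : R2) :
    (∑ p ∈ B, corr1 u p • Mn p.1 p.2 1)
      = ∑ j ∈ range 4, ((-(6/11) : ℂ) * MvPowerSeries.coeff (md 10 j) u) • Mn 5 (j+6) 1 := by
  have hB : B.filter (fun p => p.1 = 5 ∧ 6 ≤ p.2 ∧ p.2 ≤ 9)
      = (range 4).image (fun j => (5, j+6)) := by decide
  rw [show (∑ p ∈ B, corr1 u p • Mn p.1 p.2 1)
      = ∑ p ∈ B, (if p.1 = 5 ∧ 6 ≤ p.2 ∧ p.2 ≤ 9 then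
          ((-(6/11) : ℂ) * MvPowerSeries.coeff (md 10 (p.2-6)) u) • Mn p.1 p.2 1 else 0) from
    Finset.sum_congr rfl (fun p _ => by rw [corr1]; split_ifs <;> simp)]
  rw [← Finset.sum_filter, hB, Finset.sum_image (by intro x _ y _ h; simpa using h)]
  apply Finset.sum_congr rfl
  intro j hj
  norm_num

lemma sum_corr2 (u : R2) :
    (∑ p ∈ B, corr2 u p • Mn p.1 p.2 1)
      = ∑ j ∈ range 4, ((-(6/11) : ℂ) * MvPowerSeries.coeff (md j 10) u) • Mn (j+6) 5 1 := by
  have hB : B.filter (fun p => p.2 = 5 ∧ 6 ≤ p.1 ∧ p.1 ≤ 9)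
      = (range 4).image (fun j => (j+6, 5)) := by decide
  rw [show (∑ p ∈ B, corr2 u p • Mn p.1 p.2 1)
      = ∑ p ∈ B, (if p.2 = 5 ∧ 6 ≤ p.1 ∧ p.1 ≤ 9 then
          ((-(6/11) : ℂ) * MvPowerSeries.coeff (md (p.1-6) 10) u) • Mn p.1 p.2 1 else 0) from
    Finset.sum_congr rfl (fun p _ => by rw [corr2]; split_ifs <;> simp)]
  rw [← Finset.sum_filter, hB, Finset.sum_image (by intro x _ y _ h; simpa using h)]
  apply Finset.sum_congr rfl
  intro j hj
  norm_num

lemma NF_split (u : R2) :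
    NF u = A5 u + (∑ j ∈ range 4, ((-(6/11) : ℂ) * MvPowerSeries.coeff (md 10 j) u) • Mn 5 (j+6) 1)
      + (∑ j ∈ range 4, ((-(6/11) : ℂ) * MvPowerSeries.coeff (md j 10) u) • Mn (j+6) 5 1) := by
  rw [← sum_corr1, ← sum_corr2, NF, A5]
  simp only [ell, add_smul, Finset.sum_add_distrib]

set_option maxHeartbeats 1000000 in
lemma key (u : R2) : u - NF u ∈ J := by
  have e6 : ∀ f : ℕ → R2, ∑ j ∈ range 6, f j = (∑ j ∈ range 4, f j) + f 4 + f 5 := by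
    intro f
    rw [show (6:ℕ) = 5+1 from rfl, Finset.sum_range_succ, show (5:ℕ) = 4+1 from rfl,
      Finset.sum_range_succ]
  have t1 : (∑ j ∈ range 4, MvPowerSeries.coeff (md 10 j) u • Mn 10 j 1)
      - (∑ j ∈ range 4, ((-(6/11):ℂ) * MvPowerSeries.coeff (md 10 j) u) • Mn 5 (j+6) 1)
      = ∑ j ∈ range 4, (((1:ℂ)/11) * MvPowerSeries.coeff (md 10 j) u)
          • ((11:ℂ) • Mn 10 j 1 + (6:ℂ) • Mn 5 (j+6) 1) := by
    rw [← Finset.sum_sub_distrib]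
    apply Finset.sum_congr rfl; intro j _
    module
  have t2 : (∑ j ∈ range 4, MvPowerSeries.coeff (md j 10) u • Mn j 10 1)
      - (∑ j ∈ range 4, ((-(6/11):ℂ) * MvPowerSeries.coeff (md j 10) u) • Mn (j+6) 5 1)
      = ∑ j ∈ range 4, (((1:ℂ)/11) * MvPowerSeries.coeff (md j 10) u)
          • ((11:ℂ) • Mn j 10 1 + (6:ℂ) • Mn (j+6) 5 1) := by
    rw [← Finset.sum_sub_distrib]
    apply Finset.sum_congr rfl; intro j _
    module
  have hu : u - NF u = A1 u + A2 u + A3 u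
      + ((∑ j ∈ range 4, MvPowerSeries.coeff (md 10 j) u • Mn 10 j 1)
          - (∑ j ∈ range 4, ((-(6/11):ℂ) * MvPowerSeries.coeff (md 10 j) u) • Mn 5 (j+6) 1))
      + ((∑ j ∈ range 4, MvPowerSeries.coeff (md j 10) u • Mn j 10 1)
          - (∑ j ∈ range 4, ((-(6/11):ℂ) * MvPowerSeries.coeff (md j 10) u) • Mn (j+6) 5 1))
      + MvPowerSeries.coeff (md 10 4) u • Mn 10 4 1
      + MvPowerSeries.coeff (md 10 5) u • Mn 10 5 1
      + MvPowerSeries.coeff (md 4 10) u • Mn 4 10 1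
      + MvPowerSeries.coeff (md 5 10) u • Mn 5 10 1 := by
    have hdec := decomp u
    calc u - NF u = (A1 u + A2 u + A3 u + A4 u + A5 u) - NF u := by rw [← hdec]
      _ = _ := by
        rw [NF_split, A4, e6 (fun j => MvPowerSeries.coeff (md 10 j) u • Mn 10 j 1),
          e6 (fun j => MvPowerSeries.coeff (md j 10) u • Mn j 10 1)]
        abel
  rw [hu]
  refine add_mem (add_mem (add_mem (add_mem (add_mem
    (add_mem (add_mem (add_mem (A1_mem u) (A2_mem u)) (A3_mem u)) ?_) ?_) ?_) ?_) ?_) ?_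
  · rw [t1]
    exact Submodule.sum_mem _ fun j _ => Submodule.smul_of_tower_mem _ _ (mem_E j)
  · rw [t2]
    exact Submodule.sum_mem _ fun j _ => Submodule.smul_of_tower_mem _ _ (mem_E' j)
  · exact Submodule.smul_of_tower_mem _ _ mem_104
  · exact Submodule.smul_of_tower_mem _ _ mem_105
  · exact Submodule.smul_of_tower_mem _ _ mem_410
  · exact Submodule.smul_of_tower_mem _ _ mem_510

/-! ### The normal-form linear map and the dimension count -/

def Phi : R2 →ₗ[ℂ] (↥B → ℂ) where
  toFun u := fun p => ell p.1 u
  map_add' u v := funext fun p => ell_add p.1 u v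
  map_smul' c u := funext fun p => by simpa using ell_smul p.1 c u

lemma ker_Phi : LinearMap.ker Phi = (J.restrictScalars ℂ) := by
  ext u
  simp only [LinearMap.mem_ker, Submodule.restrictScalars_mem]
  constructor
  · intro h
    have h0 : NF u = 0 := Finset.sum_eq_zero fun p hp => by
      have hz : ell p u = 0 := congrFun h ⟨p, hp⟩
      rw [hz, zero_smul]
    have hk := key u
    rwa [h0, sub_zero] at hk
  · intro h
    funext p
    show ell (↑p) u = 0
    exact ell_vanish_of_mem h p.1 (mem_B_iff.1 p.2)

lemma Phi_surj : Function.Surjective Phi := by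
  intro w
  refine ⟨∑ p ∈ B.attach, w p • Mn p.1.1 p.1.2 1, ?_⟩
  set S : R2 := ∑ p ∈ B.attach, w p • Mn p.1.1 p.1.2 1 with hS
  have hz1 : ∀ x, MvPowerSeries.coeff (md 10 x) S = 0 := by
    intro x
    rw [hS, map_sum]
    apply Finset.sum_eq_zero; intro p _
    have hp : inB p.1.1 p.1.2 := mem_B_iff.1 p.2
    rw [map_smul, coeff_Mn, if_neg, smul_zero]
    intro ⟨h1, h2⟩
    have := hp.2.2.1; have := hp.2.2.2.1
    omega
  have hz2 : ∀ y, MvPowerSeries.coeff (md y 10) S = 0 := by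
    intro y
    rw [hS, map_sum]
    apply Finset.sum_eq_zero; intro p _
    have hp : inB p.1.1 p.1.2 := mem_B_iff.1 p.2
    rw [map_smul, coeff_Mn, if_neg, smul_zero]
    intro ⟨h1, h2⟩
    have := hp.2.2.1; have := hp.2.2.2.2
    omega
  funext q
  show ell (↑q) S = w q
  have hmain : MvPowerSeries.coeff (md q.1.1 q.1.2) S = w q := by
    rw [hS, map_sum, Finset.sum_eq_single_of_mem q (Finset.mem_attach _ _)]
    · rw [map_smul, coeff_Mn, if_pos ⟨rfl, rfl⟩, smul_eq_mul, mul_one]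
    · intro p _ hne
      rw [map_smul, coeff_Mn, if_neg, smul_zero]
      intro ⟨h1, h2⟩
      exact hne (Subtype.ext (Prod.ext h1.symm h2.symm))
  rw [ell, hmain, corr1, corr2]
  split_ifs <;> simp [hz1, hz2]

lemma finrank_quot : Module.finrank ℂ (R2 ⧸ J) = 84 := by
  have e1 := (Submodule.Quotient.restrictScalarsEquiv ℂ J).symm
  have e3 := LinearMap.quotKerEquivOfSurjective Phi Phi_surj
  rw [ker_Phi] at e3
  have := (e1.trans e3).finrank_eq
  rw [this, Module.finrank_pi, Fintype.card_coe, card_B]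

end TjurinaAux

/-- The Tjurina number of `f = x^11 + y^11 + x^6 y^6` at the origin equals 84:
`dim_ℂ ℂ⟦x,y⟧/(f, ∂f/∂x, ∂f/∂y) = 84`. -/
theorem tjurina_example_x11_y11_x6y6 :
    tjurina ((MvPowerSeries.X 0) ^ 11 + (MvPowerSeries.X 1) ^ 11
      + (MvPowerSeries.X 0) ^ 6 * (MvPowerSeries.X 1) ^ 6 : MvPowerSeries (Fin 2) ℂ)
      = 84 := by
  have h : ((MvPowerSeries.X 0) ^ 11 + (MvPowerSeries.X 1) ^ 11
      + (MvPowerSeries.X 0) ^ 6 * (MvPowerSeries.X 1) ^ 6 : MvPowerSeries (Fin 2) ℂ)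
      = TjurinaAux.Fx := rfl
  rw [h, tjurina]
  exact TjurinaAux.finrank_quot
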